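/- Let n ≥ 2 and k ≥ 3. Let a_1, ..., a_{k−1} be nontrivial partitions of n (i.e. none equal to [1^n]) and let a_k be any partition of n − 1 (possibly trivial). Write a_i = [a_{i,1}, a_{i,2}, ...] and assume Σ_{i,j} (a_{i,j} − 1) ≥ n − 1. Then Σ_{i=1}^{k} D(a_i) > n(n−1)/2, where D(a_i) is the half-dimension of the associated nilpotent orbit (in GL_n for i < k and in GL_{n−1} for i = k). -/

import Mathlib

/-- The `i`-th part of the conjugate partition: number of parts ≥ i. -/
def conjPart (a : List ℕ) (i : ℕ) : ℕ := (a.filter (fun x => i ≤ x)).length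

/-- `a` is a partition of `n`: weakly decreasing, positive parts, summing to `n`. -/
def IsPartitionOf (n : ℕ) (a : List ℕ) : Prop :=
  List.Pairwise (· ≥ ·) a ∧ (∀ x ∈ a, 1 ≤ x) ∧ a.sum = n

/-- Half-dimension of the nilpotent GL_n orbit attached to the partition `a` of `n`:
`(n² − Σ_i (a'_i)²)/2`. -/
def Dhalf (n : ℕ) (a : List ℕ) : ℚ :=
  ((n : ℚ)^2 - ∑ i ∈ Finset.range n, (conjPart a (i+1) : ℚ)^2) / 2

lemma conjPart_le_length (a : List ℕ) (i : ℕ) : conjPart a i ≤ a.length :=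
  List.length_filter_le _ _

lemma conjPart_one (a : List ℕ) (h : ∀ x ∈ a, 1 ≤ x) : conjPart a 1 = a.length := by
  unfold conjPart
  rw [List.filter_eq_self.2]
  intro x hx; simpa using h x hx

lemma conjPart_cons (x : ℕ) (t : List ℕ) (i : ℕ) :
    conjPart (x :: t) i = (if i ≤ x then 1 else 0) + conjPart t i := by
  unfold conjPart
  rw [List.filter_cons]
  by_cases h : i ≤ x <;> simp [h, Nat.add_comm]

lemma sum_conjPart (m : ℕ) (a : List ℕ) (h : ∀ x ∈ a, x ≤ m) :
    ∑ i ∈ Finset.range m, conjPart a (i+1) = a.sum := by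
  induction a with
  | nil => simp [conjPart]
  | cons x t ih =>
    have hx : x ≤ m := h x (by simp)
    have ht := ih (fun y hy => h y (by simp [hy]))
    have hfil : (Finset.range m).filter (fun i => i + 1 ≤ x) = Finset.range x := by
      ext i; simp; omega
    simp only [conjPart_cons, List.sum_cons, Finset.sum_add_distrib, ht]
    rw [← Finset.sum_filter, hfil]
    simp

lemma length_le_sum (a : List ℕ) (h : ∀ x ∈ a, 1 ≤ x) : a.length ≤ a.sum := by
  induction a with
  | nil => simp
  | cons x t ih =>
    have h1 := h x (by simp)
    have h2 := ih (fun y hy => h y (by simp [hy]))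
    simp only [List.length_cons, List.sum_cons]; omega

lemma eq_replicate_of_sum_le (a : List ℕ) (h : ∀ x ∈ a, 1 ≤ x) (h2 : a.sum ≤ a.length) :
    a = List.replicate a.length 1 := by
  induction a with
  | nil => simp
  | cons x t ih =>
    have h1 := h x (by simp)
    have h3 := length_le_sum t (fun y hy => h y (by simp [hy]))
    simp only [List.length_cons, List.sum_cons] at h2 ⊢
    have hx1 : x = 1 := by omega
    have := ih (fun y hy => h y (by simp [hy])) (by omega)
    rw [List.replicate_succ, hx1, ← this]

lemma Dhalf_bounds (m : ℕ) (a : List ℕ) (hm : 1 ≤ m) (h : IsPartitionOf m a) :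
    (m : ℚ) * ((m : ℚ) - a.length) / 2 ≤ Dhalf m a ∧
    ((m : ℚ) - a.length) * a.length ≤ Dhalf m a := by
  obtain ⟨-, hpos, hsumr⟩ := h
  have hparts : ∀ x ∈ a, x ≤ m := by
    intro x hx
    calc x ≤ a.sum := List.single_le_sum (fun y _ => Nat.zero_le y) x hx
    _ = m := hsumr
  have htot : ∑ i ∈ Finset.range m, conjPart a (i+1) = m := by
    rw [sum_conjPart m a hparts, hsumr]
  have htotQ : ∑ i ∈ Finset.range m, (conjPart a (i+1) : ℚ) = m := by
    exact_mod_cast htot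
  have hc0 : ∀ i, (0:ℚ) ≤ (conjPart a (i+1) : ℚ) := fun i => by positivity
  have hcl : ∀ i, (conjPart a (i+1) : ℚ) ≤ a.length := fun i => by
    exact_mod_cast conjPart_le_length a (i+1)
  -- B1
  have hb1 : ∑ i ∈ Finset.range m, (conjPart a (i+1) : ℚ)^2 ≤ (a.length : ℚ) * m := by
    calc ∑ i ∈ Finset.range m, (conjPart a (i+1) : ℚ)^2
        ≤ ∑ i ∈ Finset.range m, (a.length : ℚ) * (conjPart a (i+1) : ℚ) :=
          Finset.sum_le_sum (fun i _ => by nlinarith [hc0 i, hcl i])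
      _ = (a.length : ℚ) * m := by rw [← Finset.mul_sum, htotQ]
  constructor
  · unfold Dhalf; nlinarith [hb1]
  -- B2
  · have h0mem : (0:ℕ) ∈ Finset.range m := Finset.mem_range.2 (by omega)
    set S : ℚ := ∑ i ∈ (Finset.range m).erase 0, (conjPart a (i+1) : ℚ) with hS
    have hsplit : (conjPart a 1 : ℚ) + S = m := by
      rw [hS, ← htotQ]
      exact Finset.add_sum_erase _ (fun i => (conjPart a (i+1) : ℚ)) h0mem
    have hsplit2 : (conjPart a 1 : ℚ)^2 + (∑ i ∈ (Finset.range m).erase 0, (conjPart a (i+1) : ℚ)^2)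
        = ∑ i ∈ Finset.range m, (conjPart a (i+1) : ℚ)^2 :=
      Finset.add_sum_erase _ (fun i => (conjPart a (i+1) : ℚ)^2) h0mem
    have hSsq : ∑ i ∈ (Finset.range m).erase 0, (conjPart a (i+1) : ℚ)^2 ≤ S^2 := by
      calc ∑ i ∈ (Finset.range m).erase 0, (conjPart a (i+1) : ℚ)^2
          ≤ ∑ i ∈ (Finset.range m).erase 0, S * (conjPart a (i+1) : ℚ) :=
            Finset.sum_le_sum (fun i hi => by
              have hiS : (conjPart a (i+1) : ℚ) ≤ S :=
                Finset.single_le_sum (fun j _ => hc0 j) hi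
              nlinarith [hc0 i, hiS])
        _ = S * S := by rw [← Finset.mul_sum]
        _ = S^2 := by ring
    have hl : (conjPart a 1 : ℚ) = a.length := by exact_mod_cast conjPart_one a hpos
    rw [hl] at hsplit
    unfold Dhalf
    have hSval : S = (m : ℚ) - a.length := by linarith
    nlinarith [hsplit2, hSsq, hl, hSval]

theorem stmt9 (n k : ℕ) (hn : 2 ≤ n) (hk : 3 ≤ k) (A : Fin k → List ℕ)
    (hpart : ∀ i : Fin k, IsPartitionOf (if i.val + 1 = k then n - 1 else n) (A i))
    (hnontriv : ∀ i : Fin k, i.val + 1 ≠ k → A i ≠ List.replicate n 1)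
    (hsum : (n : ℤ) - 1 ≤ ∑ i : Fin k, (((A i).sum : ℤ) - (A i).length)) :
    (n : ℚ) * ((n : ℚ) - 1) / 2
      < ∑ i : Fin k, Dhalf (if i.val + 1 = k then n - 1 else n) (A i) := by
  set M : Fin k → ℕ := fun i => if i.val + 1 = k then n - 1 else n with hM
  set last : Fin k := ⟨k - 1, by omega⟩ with hlast
  have hlast_iff : ∀ i : Fin k, i.val + 1 = k ↔ i = last := by
    intro i
    constructor
    · intro h; exact Fin.ext (by simp [hlast]; omega)
    · intro h; subst h; simp [hlast]; omega
  have hM1 : ∀ i, 1 ≤ M i := by intro i; simp only [hM]; split <;> omega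
  have hMne : ∀ i : Fin k, i ≠ last → M i = n := by
    intro i hi; simp only [hM]
    rw [if_neg (fun h => hi ((hlast_iff i).1 h))]
  have hMlast : M last = n - 1 := by
    simp only [hM]; rw [if_pos ((hlast_iff last).2 rfl)]
  have hMQ : ∀ i, ((M i : ℚ)) = if i = last then (n : ℚ) - 1 else (n : ℚ) := by
    intro i
    by_cases hi : i = last
    · subst hi; rw [hMlast, if_pos rfl]; push_cast [Nat.cast_sub (by omega : 1 ≤ n)]; ring
    · rw [hMne i hi, if_neg hi]
  -- rational quantities
  set L : Fin k → ℚ := fun i => ((A i).length : ℚ) with hL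
  set d : Fin k → ℚ := fun i => (M i : ℚ) - L i with hd
  set D : Fin k → ℚ := fun i => Dhalf (M i) (A i) with hD
  have hpart' : ∀ i, IsPartitionOf (M i) (A i) := hpart
  have hsumM : ∀ i, (A i).sum = M i := fun i => (hpart' i).2.2
  have hposM : ∀ i, ∀ x ∈ A i, 1 ≤ x := fun i => (hpart' i).2.1
  have hd0 : ∀ i, 0 ≤ d i := by
    intro i
    have := length_le_sum (A i) (hposM i)
    rw [hsumM i] at this
    simp only [hd, hL]
    have : ((A i).length : ℚ) ≤ (M i : ℚ) := by exact_mod_cast this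
    linarith
  have hd1 : ∀ i : Fin k, i ≠ last → 1 ≤ d i := by
    intro i hi
    have hlen : (A i).length < (A i).sum := by
      rcases Nat.lt_or_ge (A i).length (A i).sum with h | h
      · exact h
      · exfalso
        have heq := eq_replicate_of_sum_le (A i) (hposM i) h
        have hlen2 : (A i).length = (A i).sum := le_antisymm (length_le_sum _ (hposM i)) h
        have h4 : (A i).sum = n := by rw [hsumM i, hMne i hi]
        have hln : (A i).length = n := by omega
        exact hnontriv i (fun hc => hi ((hlast_iff i).1 hc)) (by rw [heq, hln])
    rw [hsumM i] at hlen
    simp only [hd, hL]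
    have : ((A i).length : ℚ) + 1 ≤ (M i : ℚ) := by exact_mod_cast hlen
    linarith
  have hB1 : ∀ i, (M i : ℚ) * d i / 2 ≤ D i := fun i =>
    (Dhalf_bounds (M i) (A i) (hM1 i) (hpart' i)).1
  have hB2 : ∀ i, d i * L i ≤ D i := fun i => by
    have := (Dhalf_bounds (M i) (A i) (hM1 i) (hpart' i)).2
    simpa [hd, hL, mul_comm] using this
  have hLeq : ∀ i, L i = (M i : ℚ) - d i := by intro i; simp only [hd]; ring
  -- bound D i from below by (n/2) * d i for i ≠ last
  have hB1' : ∀ i : Fin k, i ≠ last → (n : ℚ) * d i / 2 ≤ D i := by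
    intro i hi
    have := hB1 i
    rw [hMne i hi] at this
    exact this
  have hB1last : ((n : ℚ) - 1) * d last / 2 ≤ D last := by
    have := hB1 last
    rw [hMQ last, if_pos rfl] at this
    exact this
  -- sum hypothesis in ℚ
  have hsumQ : (n : ℚ) - 1 ≤ ∑ i, d i := by
    have hZ : (n : ℤ) - 1 ≤ ∑ i : Fin k, ((M i : ℤ) - ((A i).length : ℤ)) := by
      calc (n : ℤ) - 1 ≤ ∑ i : Fin k, (((A i).sum : ℤ) - (A i).length) := hsum
        _ = ∑ i : Fin k, ((M i : ℤ) - ((A i).length : ℤ)) := by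
          apply Finset.sum_congr rfl
          intro i _
          rw [hsumM i]
    have h3 : (((n : ℤ) - 1 : ℤ) : ℚ) ≤ ((∑ i : Fin k, ((M i : ℤ) - ((A i).length : ℤ)) : ℤ) : ℚ) :=
      Int.cast_le.2 hZ
    push_cast at h3
    calc (n:ℚ) - 1 ≤ ∑ i : Fin k, ((M i : ℚ) - ((A i).length : ℚ)) := by exact_mod_cast h3
      _ = ∑ i, d i := Finset.sum_congr rfl (fun i _ => by simp only [hd, hL])
  -- the target sum equals sum of D
  have hgoal_eq : ∑ i : Fin k, Dhalf (if i.val + 1 = k then n - 1 else n) (A i) = ∑ i, D i := rfl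
  rw [hgoal_eq]
  -- split off last
  have hlast_mem : last ∈ (Finset.univ : Finset (Fin k)) := Finset.mem_univ _
  set s : ℚ := ∑ i ∈ Finset.univ.erase last, d i with hs
  have hsplitD : ∑ i, D i = D last + ∑ i ∈ Finset.univ.erase last, D i :=
    (Finset.add_sum_erase _ D hlast_mem).symm
  have hsplitd : ∑ i, d i = d last + s := (Finset.add_sum_erase _ d hlast_mem).symm
  clear_value s
  clear_value M L d D
  clear hM hL hd hD
  have hn2 : (2:ℚ) ≤ (n:ℚ) := by exact_mod_cast hn
  have hDlast0 : 0 ≤ D last := by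
    have h7 : 0 ≤ ((n:ℚ) - 1) * d last := mul_nonneg (by linarith) (hd0 last)
    nlinarith [hB1last]
  -- generic lower bound on erased sums
  have herased : ∀ (t : Finset (Fin k)), (∀ i ∈ t, i ≠ last) →
      (n : ℚ) / 2 * (∑ i ∈ t, d i) ≤ ∑ i ∈ t, D i := by
    intro t ht
    rw [Finset.mul_sum]
    exact Finset.sum_le_sum (fun i hi => by
      have := hB1' i (ht i hi); linarith)
  by_cases hcase : (n : ℚ) - 1 < s
  · -- easy case
    have h1 := herased (Finset.univ.erase last) (fun i hi => (Finset.mem_erase.1 hi).1)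
    rw [← hs] at h1
    rw [hsplitD]
    nlinarith [hDlast0, h1, mul_pos (by linarith : (0:ℚ) < (n:ℚ)/2)
      (by linarith : (0:ℚ) < s - ((n:ℚ)-1))]
  · push_neg at hcase
    -- choose the index with smaller d among first two
    set j0 : Fin k := ⟨0, by omega⟩ with hj0
    set j1 : Fin k := ⟨1, by omega⟩ with hj1
    have hj0last : j0 ≠ last := by simp [hj0, hlast, Fin.ext_iff]; omega
    have hj1last : j1 ≠ last := by simp [hj1, hlast, Fin.ext_iff]; omega
    have hj01 : j0 ≠ j1 := by simp [hj0, hj1, Fin.ext_iff]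
    have hpairsub : ({j0, j1} : Finset (Fin k)) ⊆ Finset.univ.erase last := by
      intro x hx
      rcases Finset.mem_insert.1 hx with h | h
      · subst h; exact Finset.mem_erase.2 ⟨hj0last, Finset.mem_univ _⟩
      · rw [Finset.mem_singleton.1 h]; exact Finset.mem_erase.2 ⟨hj1last, Finset.mem_univ _⟩
    have hpair : d j0 + d j1 ≤ s := by
      have := Finset.sum_le_sum_of_subset_of_nonneg hpairsub
        (fun i _ _ => hd0 i)
      rw [Finset.sum_pair hj01, ← hs] at this
      exact this
    have hdlast_ge : (n : ℚ) - 1 - s ≤ d last := by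
      rw [hsplitd] at hsumQ; linarith
    have hsn : s ≤ (n : ℚ) - 1 := hcase
    -- main argument for a chosen j
    have main : ∀ j : Fin k, j ≠ last → 2 * d j ≤ s →
        (n : ℚ) * ((n : ℚ) - 1) / 2 < ∑ i, D i := by
      intro j hj h2d
      have hjmem : j ∈ Finset.univ.erase last := Finset.mem_erase.2 ⟨hj, Finset.mem_univ _⟩
      have hsplit2 : ∑ i ∈ Finset.univ.erase last, D i
          = D j + ∑ i ∈ (Finset.univ.erase last).erase j, D i :=
        (Finset.add_sum_erase _ D hjmem).symm
      have hsplitd2 : s = d j + ∑ i ∈ (Finset.univ.erase last).erase j, d i := by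
        rw [hs]
        exact (Finset.add_sum_erase _ d hjmem).symm
      have hrest : (n:ℚ)/2 * (s - d j) ≤ ∑ i ∈ (Finset.univ.erase last).erase j, D i := by
        have h5 := herased ((Finset.univ.erase last).erase j)
          (fun i hi => (Finset.mem_erase.1 (Finset.mem_erase.1 hi).2).1)
        have heq2 : ∑ i ∈ (Finset.univ.erase last).erase j, d i = s - d j := by
          linarith [hsplitd2]
        rw [heq2] at h5
        exact h5
      have hBj : d j * ((n:ℚ) - d j) ≤ D j := by
        have h6 := hB2 j
        rw [hLeq j, hMne j hj] at h6
        exact h6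
      have hdj1 := hd1 j hj
      have hdlastB : ((n:ℚ)-1)/2 * ((n:ℚ)-1-s) ≤ D last := by
        have hprod : 0 ≤ ((n:ℚ)-1)/2 * (d last - ((n:ℚ)-1-s)) :=
          mul_nonneg (by linarith) (by linarith [hdlast_ge])
        nlinarith [hB1last]
      rw [hsplitD, hsplit2]
      nlinarith [hrest, hBj, hdlastB, hdj1, h2d, hsn, hn2,
        mul_nonneg (by linarith : (0:ℚ) ≤ d j - 1)
          (by linarith : (0:ℚ) ≤ (n:ℚ) - 1 - 2 * d j)]
    rcases le_total (d j0) (d j1) with h | h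
    · exact main j0 hj0last (by linarith)
    · exact main j1 hj1last (by linarith)
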